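/- Let u⁻ᵃ, f be C¹ with f, u⁻ᵃ satisfying Assumption 2, and let φ⁻ be defined as in equation (2.2). Then φ⁻ satisfies the first-order PDE φ⁻·(∂φ⁻/∂x + ∂φ⁻/∂y + ∂φ⁻/∂z) = f(x,y,z) on ℝ² × (-a,a). -/

import Mathlib

open Set intervalIntegral MeasureTheory Metric Asymptotics


lemma diffAt_param_integral (f : ℝ × ℝ × ℝ → ℝ) (hf : ContDiff ℝ 1 f) (c d : ℝ)
    (w₀ : ℝ × ℝ × ℝ) :
    DifferentiableAt ℝ (fun v : ℝ × ℝ × ℝ => ∫ t in c..d, f (v.1 + t, v.2.1 + t, t)) w₀ := by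
  have hfc : Continuous f := hf.continuous
  have hfd : Continuous (fderiv ℝ f) := hf.continuous_fderiv one_ne_zero
  set J : (ℝ × ℝ × ℝ) →L[ℝ] (ℝ × ℝ × ℝ) :=
    (ContinuousLinearMap.fst ℝ ℝ (ℝ × ℝ)).prod
      (((ContinuousLinearMap.fst ℝ ℝ ℝ).comp (ContinuousLinearMap.snd ℝ ℝ (ℝ × ℝ))).prod 0) with hJ
  have hJapp : ∀ v : ℝ × ℝ × ℝ, J v = (v.1, v.2.1, 0) := fun v => rfl
  have hψ : Continuous (fun p : (ℝ × ℝ × ℝ) × ℝ => ((p.1.1 + p.2, p.1.2.1 + p.2, p.2) : ℝ × ℝ × ℝ)) := by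
    fun_prop
  obtain ⟨C, hC⟩ := ((isCompact_closedBall w₀ 1).prod isCompact_uIcc).exists_bound_of_continuousOn
      (Continuous.continuousOn ((hfd.comp hψ)))
  have hinner : ∀ (t : ℝ) (v : ℝ × ℝ × ℝ),
      HasFDerivAt (fun v : ℝ × ℝ × ℝ => ((v.1 + t, v.2.1 + t, t) : ℝ × ℝ × ℝ)) J v := by
    intro t v
    have heq : (fun v : ℝ × ℝ × ℝ => ((v.1 + t, v.2.1 + t, t) : ℝ × ℝ × ℝ))
        = fun v => J v + (t, t, t) := by
      funext v; simp [hJapp, Prod.ext_iff]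
    rw [heq]
    exact J.hasFDerivAt.add_const (t, t, t)
  have key := intervalIntegral.hasFDerivAt_integral_of_dominated_of_fderiv_le
    (𝕜 := ℝ) (μ := volume) (a := c) (b := d) (s := ball w₀ 1)
    (F := fun (v : ℝ × ℝ × ℝ) (t : ℝ) => f (v.1 + t, v.2.1 + t, t))
    (F' := fun (v : ℝ × ℝ × ℝ) (t : ℝ) => (fderiv ℝ f (v.1 + t, v.2.1 + t, t)).comp J)
    (x₀ := w₀) (bound := fun _ => C * ‖J‖) (ball_mem_nhds w₀ one_pos)
    (Filter.Eventually.of_forall fun v =>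
      ((hfc.comp (by fun_prop)).aestronglyMeasurable))
    ((hfc.comp (by fun_prop)).intervalIntegrable c d)
    (((hfd.comp (by fun_prop)).clm_comp continuous_const).aestronglyMeasurable)
    (MeasureTheory.ae_of_all _ (fun t ht v hv => by
      calc ‖(fderiv ℝ f (v.1 + t, v.2.1 + t, t)).comp J‖
          ≤ ‖fderiv ℝ f (v.1 + t, v.2.1 + t, t)‖ * ‖J‖ := ContinuousLinearMap.opNorm_comp_le _ _
        _ ≤ C * ‖J‖ := by
            apply mul_le_mul_of_nonneg_right _ (norm_nonneg J)
            exact hC (v, t) ⟨ball_subset_closedBall hv, uIoc_subset_uIcc ht⟩))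
    (intervalIntegrable_const)
    (MeasureTheory.ae_of_all _ (fun t ht v hv =>
      ((hf.differentiable one_ne_zero _).hasFDerivAt).comp v (hinner t v)))
  exact key.differentiableAt


lemma hasFDerivAt_endpoint_integral (f : ℝ × ℝ × ℝ → ℝ) (hf : Continuous f)
    (x₀ y₀ z₀ : ℝ) :
    HasFDerivAt (fun v : ℝ × ℝ × ℝ => ∫ t in z₀..v.2.2, f (v.1 + t, v.2.1 + t, t))
      (f (x₀ + z₀, y₀ + z₀, z₀) •
        ((ContinuousLinearMap.snd ℝ ℝ ℝ).comp (ContinuousLinearMap.snd ℝ ℝ (ℝ × ℝ))))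
      ((x₀, y₀, z₀) : ℝ × ℝ × ℝ) := by
  rw [hasFDerivAt_iff_isLittleO_nhds_zero, Asymptotics.isLittleO_iff]
  intro c hc
  set P₀ : ℝ × ℝ × ℝ := (x₀ + z₀, y₀ + z₀, z₀) with hP₀
  obtain ⟨δ, hδ, hδf⟩ := Metric.continuousAt_iff.mp hf.continuousAt c hc
  filter_upwards [Metric.ball_mem_nhds (0 : ℝ × ℝ × ℝ) (by positivity : 0 < δ / 2)] with h hh
  have hnorm : ‖h‖ < δ / 2 := by simpa [dist_zero_right] using hh
  have h1le : |h.1| ≤ ‖h‖ := norm_fst_le h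
  have h2le : |h.2.1| ≤ ‖h‖ := (norm_fst_le h.2).trans (norm_snd_le h)
  have h3le : |h.2.2| ≤ ‖h‖ := (norm_snd_le h.2).trans (norm_snd_le h)
  -- simplify the goal
  have hint : ∀ (u v : ℝ), IntervalIntegrable
      (fun t => f (x₀ + h.1 + t, y₀ + h.2.1 + t, t)) volume u v :=
    fun u v => (hf.comp (by fun_prop)).intervalIntegrable u v
  have hintc : ∀ (u v : ℝ), IntervalIntegrable (fun _ : ℝ => f P₀) volume u v :=
    fun u v => intervalIntegrable_const
  have key : ‖∫ t in z₀..(z₀ + h.2.2), (f (x₀ + h.1 + t, y₀ + h.2.1 + t, t) - f P₀)‖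
      ≤ c * |h.2.2| := by
    have hb : ∀ t ∈ Set.uIoc z₀ (z₀ + h.2.2),
        ‖f (x₀ + h.1 + t, y₀ + h.2.1 + t, t) - f P₀‖ ≤ c := by
      intro t ht
      have ht' : |t - z₀| ≤ |h.2.2| := by
        rw [Set.mem_uIoc] at ht
        rw [abs_le]
        rcases ht with ⟨ha1, ha2⟩ | ⟨ha1, ha2⟩ <;>
          constructor <;> nlinarith [le_abs_self h.2.2, neg_abs_le h.2.2]
      have hdist : dist ((x₀ + h.1 + t, y₀ + h.2.1 + t, t) : ℝ × ℝ × ℝ) P₀ < δ := by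
        have e1 : dist (x₀ + h.1 + t) (x₀ + z₀) < δ := by
          rw [Real.dist_eq]
          have : |x₀ + h.1 + t - (x₀ + z₀)| ≤ |h.1| + |t - z₀| := by
            have := abs_add_le h.1 (t - z₀); calc |x₀ + h.1 + t - (x₀ + z₀)| = |h.1 + (t - z₀)| := by ring_nf
              _ ≤ |h.1| + |t - z₀| := abs_add_le _ _
          linarith
        have e2 : dist (y₀ + h.2.1 + t) (y₀ + z₀) < δ := by
          rw [Real.dist_eq]
          have : |y₀ + h.2.1 + t - (y₀ + z₀)| ≤ |h.2.1| + |t - z₀| := by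
            calc |y₀ + h.2.1 + t - (y₀ + z₀)| = |h.2.1 + (t - z₀)| := by ring_nf
              _ ≤ |h.2.1| + |t - z₀| := abs_add_le _ _
          linarith
        have e3 : dist t z₀ < δ := by
          rw [Real.dist_eq]; linarith
        calc dist ((x₀ + h.1 + t, y₀ + h.2.1 + t, t) : ℝ × ℝ × ℝ) P₀
            = max (dist (x₀ + h.1 + t) (x₀ + z₀)) (max (dist (y₀ + h.2.1 + t) (y₀ + z₀)) (dist t z₀)) := rfl
          _ < δ := by simp [e1, e2, e3]
      have := hδf hdist
      rw [Real.dist_eq] at this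
      exact le_of_lt (by simpa [Real.norm_eq_abs] using this)
    calc ‖∫ t in z₀..(z₀ + h.2.2), (f (x₀ + h.1 + t, y₀ + h.2.1 + t, t) - f P₀)‖
        ≤ c * |z₀ + h.2.2 - z₀| := intervalIntegral.norm_integral_le_of_norm_le_const hb
      _ = c * |h.2.2| := by ring_nf
  have heq : ((x₀, y₀, z₀) : ℝ × ℝ × ℝ) + h = ((x₀ + h.1, y₀ + h.2.1, z₀ + h.2.2) : ℝ × ℝ × ℝ) := rfl
  rw [heq]
  simp only [intervalIntegral.integral_same, sub_zero, ContinuousLinearMap.smul_apply,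
    ContinuousLinearMap.coe_comp', Function.comp_apply, ContinuousLinearMap.coe_snd',
    smul_eq_mul]
  have hsplit : (∫ t in z₀..(z₀ + h.2.2), f (x₀ + h.1 + t, y₀ + h.2.1 + t, t))
      - f P₀ * h.2.2
      = ∫ t in z₀..(z₀ + h.2.2), (f (x₀ + h.1 + t, y₀ + h.2.1 + t, t) - f P₀) := by
    rw [intervalIntegral.integral_sub (hint _ _) (hintc _ _)]
    simp [intervalIntegral.integral_const]
    ring
  calc ‖(∫ t in z₀..(z₀ + h.2.2), f (x₀ + h.1 + t, y₀ + h.2.1 + t, t)) - f P₀ * h.2.2‖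
      = ‖∫ t in z₀..(z₀ + h.2.2), (f (x₀ + h.1 + t, y₀ + h.2.1 + t, t) - f P₀)‖ := by rw [hsplit]
    _ ≤ c * |h.2.2| := key
    _ ≤ c * ‖h‖ := mul_le_mul_of_nonneg_left h3le (le_of_lt hc)




lemma diffAt_N3 (f : ℝ × ℝ × ℝ → ℝ) (hf : ContDiff ℝ 1 f) (c : ℝ) (x₀ y₀ z₀ : ℝ) :
    DifferentiableAt ℝ (fun v : ℝ × ℝ × ℝ => ∫ t in c..v.2.2, f (v.1 + t, v.2.1 + t, t))
      ((x₀, y₀, z₀) : ℝ × ℝ × ℝ) := by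
  have hcont : Continuous f := hf.continuous
  have heq : (fun v : ℝ × ℝ × ℝ => ∫ t in c..v.2.2, f (v.1 + t, v.2.1 + t, t)) =
      fun v : ℝ × ℝ × ℝ => (∫ t in c..z₀, f (v.1 + t, v.2.1 + t, t))
        + ∫ t in z₀..v.2.2, f (v.1 + t, v.2.1 + t, t) := by
    funext v
    have hg : Continuous fun t : ℝ => f (v.1 + t, v.2.1 + t, t) := by fun_prop
    exact (intervalIntegral.integral_add_adjacent_intervals
      (hg.intervalIntegrable c z₀) (hg.intervalIntegrable z₀ v.2.2)).symm
  rw [heq]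
  exact (diffAt_param_integral f hf c z₀ _).add
    (hasFDerivAt_endpoint_integral f hcont x₀ y₀ z₀).differentiableAt



/-- The explicit characteristic formula φ⁻ solves the reduced stationary PDE
    φ⁻ (φ⁻_x + φ⁻_y + φ⁻_z) = f on ℝ² × (-a,a). -/
theorem stmt_6 (a : ℝ) (ha : 0 < a)
    (uma : ℝ × ℝ → ℝ) (f : ℝ × ℝ × ℝ → ℝ)
    (huma : ContDiff ℝ 1 uma) (hf : ContDiff ℝ 1 f)
    (hA2 : ∀ x y z : ℝ, z ∈ Icc (-a) a →
      (uma (x - a - z, y - a - z)) ^ 2 >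
        -2 * ∫ s in (0 : ℝ)..(a + z), f (x - a - z + s, y - a - z + s, -a + s))
    (φm : ℝ × ℝ × ℝ → ℝ)
    (hφ : ∀ x y z : ℝ, φm (x, y, z) =
      -Real.sqrt ((uma (x - a - z, y - a - z)) ^ 2 +
        2 * ∫ s in (0 : ℝ)..(a + z), f (x - a - z + s, y - a - z + s, -a + s))) :
    ∀ x y z : ℝ, z ∈ Ioo (-a) a →
      φm (x, y, z) *
          (fderiv ℝ φm (x, y, z) (1, 0, 0) + fderiv ℝ φm (x, y, z) (0, 1, 0) +
            fderiv ℝ φm (x, y, z) (0, 0, 1)) = f (x, y, z) := by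
  intro x y z hz
  -- characteristic form of the argument of the square root
  set G : ℝ × ℝ × ℝ → ℝ := fun v =>
    (uma (v.1 - a - v.2.2, v.2.1 - a - v.2.2)) ^ 2 +
      2 * ∫ t in (-a)..v.2.2, f (v.1 - v.2.2 + t, v.2.1 - v.2.2 + t, t) with hGdef
  -- the integral identity (change of variables t = -a + s)
  have hIeq : ∀ p q r : ℝ,
      (∫ s in (0 : ℝ)..(a + r), f (p - a - r + s, q - a - r + s, -a + s)) =
        ∫ t in (-a)..r, f (p - r + t, q - r + t, t) := by
    intro p q r
    have harg : (fun s : ℝ => f (p - a - r + s, q - a - r + s, -a + s)) =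
        fun s : ℝ => (fun t => f (p - r + t, q - r + t, t)) (-a + s) := by
      funext s
      exact congrArg f (by simp only [Prod.mk.injEq]; refine ⟨by ring, by ring, trivial⟩)
    rw [harg, intervalIntegral.integral_comp_add_left (fun t => f (p - r + t, q - r + t, t)) (-a)]
    norm_num
  have hφG : ∀ v : ℝ × ℝ × ℝ, φm v = -Real.sqrt (G v) := by
    intro v
    obtain ⟨p, q, r⟩ := v
    rw [hφ p q r, hGdef]
    simp only
    rw [hIeq p q r]
  have hφGf : φm = fun v => -Real.sqrt (G v) := funext hφG
  -- positivity
  have hGpos : 0 < G (x, y, z) := by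
    have h2 := hA2 x y z ⟨le_of_lt hz.1, le_of_lt hz.2⟩
    rw [hIeq x y z] at h2
    simp only [hGdef]
    linarith
  -- differentiability of G
  have hGdiff : DifferentiableAt ℝ G ((x, y, z) : ℝ × ℝ × ℝ) := by
    have h1 : DifferentiableAt ℝ
        (fun v : ℝ × ℝ × ℝ => (uma (v.1 - a - v.2.2, v.2.1 - a - v.2.2)) ^ 2)
        ((x, y, z) : ℝ × ℝ × ℝ) := by
      have hu : DifferentiableAt ℝ uma ((x - a - z, y - a - z) : ℝ × ℝ) :=
        (huma.differentiable one_ne_zero) _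
      have hin : DifferentiableAt ℝ
          (fun v : ℝ × ℝ × ℝ => ((v.1 - a - v.2.2, v.2.1 - a - v.2.2) : ℝ × ℝ))
          ((x, y, z) : ℝ × ℝ × ℝ) := by fun_prop
      exact (DifferentiableAt.comp ((x, y, z) : ℝ × ℝ × ℝ) hu hin).pow 2
    have hN := diffAt_N3 f hf (-a) (x - z) (y - z) z
    have hmap : DifferentiableAt ℝ
        (fun v : ℝ × ℝ × ℝ => ((v.1 - v.2.2, v.2.1 - v.2.2, v.2.2) : ℝ × ℝ × ℝ))
        ((x, y, z) : ℝ × ℝ × ℝ) := by fun_prop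
    have h2 : DifferentiableAt ℝ
        (fun v : ℝ × ℝ × ℝ => ∫ t in (-a)..v.2.2, f (v.1 - v.2.2 + t, v.2.1 - v.2.2 + t, t))
        ((x, y, z) : ℝ × ℝ × ℝ) := by
        have h := DifferentiableAt.comp ((x, y, z) : ℝ × ℝ × ℝ) hN hmap; exact h
    exact h1.add (h2.const_mul 2)
  set D := fderiv ℝ G ((x, y, z) : ℝ × ℝ × ℝ) with hD
  have hGf : HasFDerivAt G D ((x, y, z) : ℝ × ℝ × ℝ) := hGdiff.hasFDerivAt
  -- directional derivative along the characteristic (1,1,1)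
  have hdir : D (1, 1, 1) = 2 * f (x, y, z) := by
    have hcurve : HasDerivAt (fun t : ℝ => ((x + t, y + t, z + t) : ℝ × ℝ × ℝ))
        ((1, 1, 1) : ℝ × ℝ × ℝ) 0 := by
      have h1 : HasDerivAt (fun t : ℝ => x + t) 1 0 := (hasDerivAt_id 0).const_add x
      have h2 : HasDerivAt (fun t : ℝ => y + t) 1 0 := (hasDerivAt_id 0).const_add y
      have h3 : HasDerivAt (fun t : ℝ => z + t) 1 0 := (hasDerivAt_id 0).const_add z
      exact h1.prodMk (h2.prodMk h3)
    have hGf' : HasFDerivAt G D ((x + 0, y + 0, z + 0) : ℝ × ℝ × ℝ) := by simpa using hGf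
    have hh1 : HasDerivAt (fun t : ℝ => G (x + t, y + t, z + t)) (D (1, 1, 1)) 0 :=
      by have h := hGf'.comp_hasDerivAt 0 hcurve; exact h
    -- the same curve via FTC
    have hfc : Continuous f := hf.continuous
    have hFc : Continuous (fun τ : ℝ => f (x - z + τ, y - z + τ, τ)) := by fun_prop
    have hFTC : HasDerivAt (fun b : ℝ => ∫ τ in (-a)..b, f (x - z + τ, y - z + τ, τ))
        (f (x - z + z, y - z + z, z)) z :=
      intervalIntegral.integral_hasDerivAt_right (hFc.intervalIntegrable _ _)
        hFc.stronglyMeasurable.stronglyMeasurableAtFilter hFc.continuousAt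
    have hlin : HasDerivAt (fun t : ℝ => z + t) 1 0 := (hasDerivAt_id 0).const_add z
    have hcomp : HasDerivAt
        (fun t : ℝ => ∫ τ in (-a)..(z + t), f (x - z + τ, y - z + τ, τ))
        (f (x - z + z, y - z + z, z)) 0 := by
      have := (show HasDerivAt (fun b : ℝ => ∫ τ in (-a)..b, f (x - z + τ, y - z + τ, τ))
          (f (x - z + z, y - z + z, z)) (z + 0) from by simpa using hFTC).comp 0 hlin
      rw [mul_one] at this; exact this
    have hhe : (fun t : ℝ => G (x + t, y + t, z + t)) =
        fun t : ℝ => (uma (x - a - z, y - a - z)) ^ 2 +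
          2 * ∫ τ in (-a)..(z + t), f (x - z + τ, y - z + τ, τ) := by
      funext t
      simp only [hGdef]
      congr 1
      · congr 1
        exact congrArg uma (by simp only [Prod.mk.injEq]; exact ⟨by ring, by ring⟩)
      · congr 1
        exact intervalIntegral.integral_congr fun τ _ =>
          congrArg f (by simp only [Prod.mk.injEq]; exact ⟨by ring, by ring, trivial⟩)
    have hh2 : HasDerivAt (fun t : ℝ => G (x + t, y + t, z + t)) (2 * f (x, y, z)) 0 := by
      rw [hhe]
      have harg : f (x - z + z, y - z + z, z) = f (x, y, z) :=
        congrArg f (by simp only [Prod.mk.injEq]; exact ⟨by ring, by ring, trivial⟩)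
      have := (hcomp.const_mul 2).const_add ((uma (x - a - z, y - a - z)) ^ 2)
      rwa [harg] at this
    exact hh1.unique hh2
  -- the square root chain rule
  have hsqpos : 0 < Real.sqrt (G (x, y, z)) := Real.sqrt_pos.mpr hGpos
  have hsqrt : HasDerivAt Real.sqrt (1 / (2 * Real.sqrt (G (x, y, z)))) (G (x, y, z)) :=
    Real.hasDerivAt_sqrt (ne_of_gt hGpos)
  have hφder : HasFDerivAt φm (-((1 / (2 * Real.sqrt (G (x, y, z)))) • D))
      ((x, y, z) : ℝ × ℝ × ℝ) := by
    rw [hφGf]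
    exact (hsqrt.comp_hasFDerivAt _ hGf).neg
  have hfd := hφder.fderiv
  rw [hφG (x, y, z), hfd]
  simp only [ContinuousLinearMap.neg_apply, ContinuousLinearMap.smul_apply, smul_eq_mul]
  have hsum : D (1, 0, 0) + D (0, 1, 0) + D (0, 0, 1) = 2 * f (x, y, z) := by
    rw [← hdir, ← map_add, ← map_add]
    norm_num
  have hne : Real.sqrt (G (x, y, z)) ≠ 0 := ne_of_gt hsqpos
  have hS : -(1 / (2 * Real.sqrt (G (x, y, z))) * D (1, 0, 0)) +
      -(1 / (2 * Real.sqrt (G (x, y, z))) * D (0, 1, 0)) +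
      -(1 / (2 * Real.sqrt (G (x, y, z))) * D (0, 0, 1)) =
      -(1 / (2 * Real.sqrt (G (x, y, z)))) * (2 * f (x, y, z)) := by
    rw [← hsum]; ring
  rw [hS]
  field_simp
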